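/- Let n ≥ 1, let B be an (n+1)×(n+1) real matrix with zero diagonal whose last column is zero, and let σ > 0. Write l for the last index, S for the set of the first n indices, B_SS for the top-left n×n block of B, and I := σ⁻²·(1 − B)ᵀ·(1 − B). Then the Schur complement of I with respect to the entry I_{ll} satisfies I_{SS} − I_{S,l}·(I_{ll})⁻¹·I_{l,S} = σ⁻²·(1_n − B_SS)ᵀ·(1_n − B_SS), i.e., marginalizing the leaf node l from the SJIM via the Schur complement yields exactly the SJIM of the linear ANM on the remaining n variables with structural matrix B_SS. -/

import Mathlib

open Matrix

/-- **Exact Marginalization via the Schur complement (Theorem 3.2).**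
For a linear ANM with zero-diagonal adjacency matrix `B` whose last column (leaf
node `l`) is zero, the Schur complement of the SJIM `I = σ⁻² (1 − B)ᵀ (1 − B)`
with respect to `I l l` equals the SJIM `σ⁻² (1 − B_SS)ᵀ (1 − B_SS)` of the
linear ANM on the remaining variables. -/
theorem schur_marginalization_linear_anm
    {n : ℕ} (hn : 1 ≤ n) (B : Matrix (Fin (n + 1)) (Fin (n + 1)) ℝ)
    (hdiag : ∀ i, B i i = 0)
    (hleaf : ∀ k, B k (Fin.last n) = 0)
    (σ : ℝ) (hσ : 0 < σ)
    (I : Matrix (Fin (n + 1)) (Fin (n + 1)) ℝ)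
    (hI : I = (σ ^ 2)⁻¹ • ((1 - B)ᵀ * (1 - B)))
    (Bss : Matrix (Fin n) (Fin n) ℝ)
    (hBss : Bss = B.submatrix Fin.castSucc Fin.castSucc) :
    ∀ i j : Fin n,
      I i.castSucc j.castSucc
          - I i.castSucc (Fin.last n) * (I (Fin.last n) (Fin.last n))⁻¹
              * I (Fin.last n) j.castSucc
        = (σ ^ 2)⁻¹ * (((1 - Bss)ᵀ * (1 - Bss) : Matrix (Fin n) (Fin n) ℝ) i j) := by
  intro i j
  subst hI hBss
  set A : Matrix (Fin (n+1)) (Fin (n+1)) ℝ := 1 - B with hA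
  have hAl : ∀ k, A k (Fin.last n) = if k = Fin.last n then 1 else 0 := by
    intro k
    simp [hA, Matrix.sub_apply, one_apply, hleaf]
  have hσ2 : (σ ^ 2 : ℝ) ≠ 0 := by positivity
  have hll : ((σ ^ 2)⁻¹ • (Aᵀ * A)) (Fin.last n) (Fin.last n) = (σ ^ 2)⁻¹ := by
    simp [Matrix.smul_apply, mul_apply, hAl]
  have hil : ∀ m : Fin (n+1), ((σ ^ 2)⁻¹ • (Aᵀ * A)) m (Fin.last n)
      = (σ ^ 2)⁻¹ * A (Fin.last n) m := by
    intro m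
    simp [Matrix.smul_apply, mul_apply, transpose_apply, hAl, mul_ite]
  have hli : ∀ m : Fin (n+1), ((σ ^ 2)⁻¹ • (Aᵀ * A)) (Fin.last n) m
      = (σ ^ 2)⁻¹ * A (Fin.last n) m := by
    intro m
    simp [Matrix.smul_apply, mul_apply, transpose_apply, hAl, ite_mul]
  rw [hll, hil, hli, inv_inv]
  have key : ∀ i' j' : Fin n, (Aᵀ * A) i'.castSucc j'.castSucc
      - A (Fin.last n) i'.castSucc * A (Fin.last n) j'.castSucc
      = (((1 - B.submatrix Fin.castSucc Fin.castSucc)ᵀ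
          * (1 - B.submatrix Fin.castSucc Fin.castSucc) : Matrix (Fin n) (Fin n) ℝ)) i' j' := by
    intro i' j'
    rw [mul_apply, mul_apply, Fin.sum_univ_castSucc]
    simp only [transpose_apply, add_sub_cancel_right]
    apply Finset.sum_congr rfl
    intro k _
    have h1 : ((1 : Matrix (Fin n) (Fin n) ℝ) - B.submatrix Fin.castSucc Fin.castSucc) k i'
        = A k.castSucc i'.castSucc := by
      simp [hA, Matrix.sub_apply, submatrix_apply, one_apply, Fin.castSucc_inj]
    have h2 : ((1 : Matrix (Fin n) (Fin n) ℝ) - B.submatrix Fin.castSucc Fin.castSucc) k j'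
        = A k.castSucc j'.castSucc := by
      simp [hA, Matrix.sub_apply, submatrix_apply, one_apply, Fin.castSucc_inj]
    rw [h1, h2]
  simp only [Matrix.smul_apply, smul_eq_mul]
  rw [← key i j]
  field_simp
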